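/- Let n ≥ 1 and s ∈ ℝ. For every ε > 0 there exists R > 0 such that for every C¹ function u : ℝⁿ → ℝ with compact support contained in {x ∈ ℝⁿ : ‖x‖ > R}, one has ∫ e^{−2s‖x‖} |∇u|² dx ≥ (s² − ε) ∫ e^{−2s‖x‖} u² dx. -/

import Mathlib

open MeasureTheory Real

/-- The `i`-th partial derivative of a function on `ℝⁿ`. -/
noncomputable def pd (n : ℕ) (f : EuclideanSpace ℝ (Fin n) → ℝ)
    (i : Fin n) (x : EuclideanSpace ℝ (Fin n)) : ℝ :=
  fderiv ℝ f x (EuclideanSpace.single i 1)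

/-- The squared Euclidean norm of the gradient, `|∇f|² = Σᵢ (∂ᵢf)²`. -/
noncomputable def gradSq (n : ℕ) (f : EuclideanSpace ℝ (Fin n) → ℝ)
    (x : EuclideanSpace ℝ (Fin n)) : ℝ :=
  ∑ i, (pd n f i x) ^ 2

/-- The Euclidean Laplacian, `Δf = Σᵢ ∂ᵢ²f`. -/
noncomputable def lap (n : ℕ) (f : EuclideanSpace ℝ (Fin n) → ℝ)
    (x : EuclideanSpace ℝ (Fin n)) : ℝ :=
  ∑ i, pd n (pd n f i) i x

variable {n : ℕ}
theorem sum_coord_mul (x : EuclideanSpace ℝ (Fin n)) (L : EuclideanSpace ℝ (Fin n) →L[ℝ] ℝ) :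
    ∑ i, x i * L (EuclideanSpace.single i 1) = L x := by
  have h : ∀ i : Fin n, x i * L (EuclideanSpace.single i 1) = L (EuclideanSpace.single i (x i)) := by
    intro i
    rw [← smul_eq_mul, ← _root_.map_smul L]
    congr 1
    ext j
    simp [EuclideanSpace.single_apply]
  rw [Finset.sum_congr rfl (fun i _ => h i), ← map_sum]
  congr 1
  ext j
  rw [WithLp.ofLp_sum, Finset.sum_apply]
  simp [EuclideanSpace.single_apply]

theorem sum_coord_sq (x : EuclideanSpace ℝ (Fin n)) : ∑ i, (x i)^2 = ‖x‖^2 := by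
  rw [EuclideanSpace.norm_eq, Real.sq_sqrt (by positivity)]
  simp [sq_abs]



noncomputable def wgt (n : ℕ) (s : ℝ) (x : EuclideanSpace ℝ (Fin n)) : ℝ := Real.exp (-2*s*‖x‖)
noncomputable def qf (n : ℕ) (s : ℝ) (x : EuclideanSpace ℝ (Fin n)) : ℝ := wgt n s x * ‖x‖⁻¹
noncomputable def cf (n : ℕ) (s : ℝ) (x : EuclideanSpace ℝ (Fin n)) : ℝ :=
  -2*s*wgt n s x*‖x‖⁻¹ - wgt n s x * (‖x‖⁻¹)^2
noncomputable def drf (n : ℕ) (x : EuclideanSpace ℝ (Fin n)) : EuclideanSpace ℝ (Fin n) →L[ℝ] ℝ :=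
  ‖x‖⁻¹ • innerSL ℝ x

theorem hasFDerivAt_norm' {n : ℕ} (x : EuclideanSpace ℝ (Fin n)) (hx : x ≠ 0) :
    HasFDerivAt (fun y : EuclideanSpace ℝ (Fin n) => ‖y‖) (drf n x) x := by
  have hn : ‖x‖ ≠ 0 := norm_ne_zero_iff.mpr hx
  have h1 : HasFDerivAt (fun y : EuclideanSpace ℝ (Fin n) => √(‖y‖^2))
      ((1 / (2 * √(‖x‖^2))) • (2 • (innerSL ℝ x))) x :=
    (hasStrictFDerivAt_norm_sq x).hasFDerivAt.sqrt (pow_ne_zero 2 hn)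
  have h2 : (fun y : EuclideanSpace ℝ (Fin n) => √(‖y‖^2)) = fun y => ‖y‖ := by
    ext y; rw [Real.sqrt_sq (norm_nonneg y)]
  rw [h2] at h1
  refine h1.congr_fderiv ?_
  rw [Real.sqrt_sq (norm_nonneg x)]
  ext y
  simp only [drf, ContinuousLinearMap.coe_smul', Pi.smul_apply, smul_eq_mul,
    ContinuousLinearMap.smul_apply]
  field_simp
  ring

theorem hasFDerivAt_wgt {n : ℕ} (s : ℝ) (x : EuclideanSpace ℝ (Fin n)) (hx : x ≠ 0) :
    HasFDerivAt (wgt n s) ((-2*s*wgt n s x) • drf n x) x := by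
  have h := ((hasFDerivAt_norm' x hx).const_mul (-2*s))
  have h2 := (Real.hasDerivAt_exp (-2*s*‖x‖)).comp_hasFDerivAt x h
  refine h2.congr_fderiv ?_
  rw [smul_smul]
  congr 1
  rw [wgt]; ring

theorem hasFDerivAt_qf {n : ℕ} (s : ℝ) (x : EuclideanSpace ℝ (Fin n)) (hx : x ≠ 0) :
    HasFDerivAt (qf n s) (cf n s x • drf n x) x := by
  have hn : ‖x‖ ≠ 0 := norm_ne_zero_iff.mpr hx
  have hinv : HasFDerivAt (fun y : EuclideanSpace ℝ (Fin n) => ‖y‖⁻¹)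
      ((-(‖x‖^2)⁻¹) • drf n x) x :=
    (hasDerivAt_inv hn).comp_hasFDerivAt x (hasFDerivAt_norm' x hx)
  have h := (hasFDerivAt_wgt s x hx).mul hinv
  refine h.congr_fderiv ?_
  rw [smul_smul, smul_smul, ← add_smul]
  congr 1
  rw [cf]
  field_simp
  ring

noncomputable def gf (n : ℕ) (s : ℝ) (u : EuclideanSpace ℝ (Fin n) → ℝ)
    (x : EuclideanSpace ℝ (Fin n)) : ℝ := u x ^ 2 * qf n s x

noncomputable def dgf (n : ℕ) (s : ℝ) (u : EuclideanSpace ℝ (Fin n) → ℝ)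
    (x : EuclideanSpace ℝ (Fin n)) : EuclideanSpace ℝ (Fin n) →L[ℝ] ℝ :=
  (2 * u x * qf n s x) • fderiv ℝ u x + (u x ^ 2 * cf n s x) • drf n x

noncomputable def Ff (n : ℕ) (s : ℝ) (u : EuclideanSpace ℝ (Fin n) → ℝ) (i : Fin n)
    (x : EuclideanSpace ℝ (Fin n)) : ℝ := -s * gf n s u x * x i

noncomputable def dFf (n : ℕ) (s : ℝ) (u : EuclideanSpace ℝ (Fin n) → ℝ) (i : Fin n)
    (x : EuclideanSpace ℝ (Fin n)) : EuclideanSpace ℝ (Fin n) →L[ℝ] ℝ :=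
  (-s * x i) • dgf n s u x + (-s * gf n s u x) • (EuclideanSpace.proj i)

section main
variable {n : ℕ} {s : ℝ} {u : EuclideanSpace ℝ (Fin n) → ℝ}

theorem u_zero (hx : x ∉ tsupport u) : u x = 0 := image_eq_zero_of_notMem_tsupport hx

theorem fderiv_u_zero {x : EuclideanSpace ℝ (Fin n)} (hx : x ∉ tsupport u) :
    fderiv ℝ u x = 0 := by
  have h : u =ᶠ[nhds x] 0 := notMem_tsupport_iff_eventuallyEq.mp hx
  rw [h.fderiv_eq]
  exact fderiv_const_apply 0

theorem dgf_zero {x : EuclideanSpace ℝ (Fin n)} (hx : x ∉ tsupport u) :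
    dgf n s u x = 0 := by
  rw [dgf, u_zero hx, fderiv_u_zero hx]
  simp

theorem hasFDerivAt_gf (hu : ContDiff ℝ 1 u) {x : EuclideanSpace ℝ (Fin n)}
    (hx : x ≠ 0 ∨ x ∉ tsupport u) : HasFDerivAt (gf n s u) (dgf n s u x) x := by
  rcases Classical.em (x ∈ tsupport u) with hmem | hmem
  · have hx0 : x ≠ 0 := hx.resolve_right (fun h => h hmem)
    have hdu : HasFDerivAt u (fderiv ℝ u x) x := (hu.differentiable one_ne_zero x).hasFDerivAt
    have hu2 : HasFDerivAt (fun y => u y ^ 2)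
        (u x • fderiv ℝ u x + u x • fderiv ℝ u x) x := by
      have h := hdu.mul hdu
      have hfun : (fun y => u y * u y) = fun y => u y ^ 2 := by ext y; ring
      rwa [Pi.mul_def, hfun] at h
    have h := hu2.mul (hasFDerivAt_qf s x hx0)
    have heq : dgf n s u x
        = u x ^ 2 • cf n s x • drf n x + qf n s x • (u x • fderiv ℝ u x + u x • fderiv ℝ u x) := by
      rw [dgf]
      ext y
      simp only [ContinuousLinearMap.add_apply, ContinuousLinearMap.coe_smul', Pi.smul_apply,
        smul_eq_mul]
      ring
    rw [heq]
    exact h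
  · have hev : gf n s u =ᶠ[nhds x] 0 := by
      have h : u =ᶠ[nhds x] 0 := notMem_tsupport_iff_eventuallyEq.mp hmem
      filter_upwards [h] with y hy
      simp [gf, hy]
    rw [dgf_zero hmem]
    exact (hasFDerivAt_const (0:ℝ) x).congr_of_eventuallyEq hev

theorem hasFDerivAt_Ff (hu : ContDiff ℝ 1 u) {x : EuclideanSpace ℝ (Fin n)}
    (hx : x ≠ 0 ∨ x ∉ tsupport u) (i : Fin n) :
    HasFDerivAt (Ff n s u i) (dFf n s u i x) x := by
  have hproj : HasFDerivAt (fun y : EuclideanSpace ℝ (Fin n) => y i)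
      (EuclideanSpace.proj (𝕜 := ℝ) i) x := by
    have : (fun y : EuclideanSpace ℝ (Fin n) => y i)
        = ⇑(EuclideanSpace.proj i : EuclideanSpace ℝ (Fin n) →L[ℝ] ℝ) := by
      ext y; simp
    rw [this]
    exact (EuclideanSpace.proj i : EuclideanSpace ℝ (Fin n) →L[ℝ] ℝ).hasFDerivAt
  have h := ((hasFDerivAt_gf (s := s) hu hx).const_mul (-s)).mul hproj
  have heq : dFf n s u i x
      = (-s * gf n s u x) • EuclideanSpace.proj i + x i • (-s) • dgf n s u x := by
    rw [dFf]
    ext y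
    simp only [ContinuousLinearMap.add_apply, ContinuousLinearMap.coe_smul', Pi.smul_apply,
      smul_eq_mul]
    ring
  rw [heq]
  exact h

end main

section cont
variable {n : ℕ} {s : ℝ} {u : EuclideanSpace ℝ (Fin n) → ℝ}

theorem dFf_apply (i : Fin n) (x v : EuclideanSpace ℝ (Fin n)) :
    dFf n s u i x v = -s * x i * (2 * u x * qf n s x * (fderiv ℝ u x v)
      + u x ^ 2 * cf n s x * (‖x‖⁻¹ * (inner ℝ x v : ℝ)))
      + -s * gf n s u x * v i := by
  simp only [dFf, dgf, drf, ContinuousLinearMap.add_apply, ContinuousLinearMap.coe_smul',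
    Pi.smul_apply, smul_eq_mul, innerSL_apply_apply]
  simp

theorem dFf_zero {x : EuclideanSpace ℝ (Fin n)} (hx : x ∉ tsupport u) (i : Fin n) :
    dFf n s u i x = 0 := by
  rw [dFf, dgf_zero hx, gf, u_zero hx]
  simp

theorem Ff_zero {x : EuclideanSpace ℝ (Fin n)} (hx : x ∉ tsupport u) (i : Fin n) :
    Ff n s u i x = 0 := by
  rw [Ff, gf, u_zero hx]; ring

theorem cont_off_support {R : ℝ} (hR : 0 < R)
    (hsupp : tsupport u ⊆ {x : EuclideanSpace ℝ (Fin n) | R < ‖x‖})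
    {f : EuclideanSpace ℝ (Fin n) → ℝ}
    (hf_zero : ∀ y ∉ tsupport u, f y = 0)
    (hf_cont : ∀ x : EuclideanSpace ℝ (Fin n), x ≠ 0 → ContinuousAt f x) :
    Continuous f := by
  rw [continuous_iff_continuousAt]
  intro x
  by_cases hmem : x ∈ tsupport u
  · exact hf_cont x (by
      intro h0
      have := hsupp hmem
      rw [h0] at this
      simp at this
      linarith)
  · have hev : f =ᶠ[nhds x] 0 := by
      have : (tsupport u)ᶜ ∈ nhds x :=
        (isClosed_tsupport u).isOpen_compl.mem_nhds hmem
      filter_upwards [this] with y hy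
      exact hf_zero y hy
    exact (continuousAt_const (y := (0:ℝ))).congr hev.symm

theorem continuousAt_qf {x : EuclideanSpace ℝ (Fin n)} (hx : x ≠ 0) :
    ContinuousAt (qf n s) x := by
  have hn : ‖x‖ ≠ 0 := norm_ne_zero_iff.mpr hx
  apply ContinuousAt.mul
  · exact (Real.continuous_exp.comp ((continuous_const.mul continuous_norm))).continuousAt
  · exact (continuous_norm.continuousAt).inv₀ hn

theorem continuousAt_cf {x : EuclideanSpace ℝ (Fin n)} (hx : x ≠ 0) :
    ContinuousAt (cf n s) x := by
  have hn : ‖x‖ ≠ 0 := norm_ne_zero_iff.mpr hx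
  have hw : ContinuousAt (wgt n s) x :=
    (Real.continuous_exp.comp ((continuous_const.mul continuous_norm))).continuousAt
  have hi : ContinuousAt (fun y : EuclideanSpace ℝ (Fin n) => ‖y‖⁻¹) x :=
    (continuous_norm.continuousAt).inv₀ hn
  exact ((continuousAt_const.mul hw).mul hi).sub (hw.mul (hi.pow 2))

theorem cont_dFf_apply {R : ℝ} (hR : 0 < R) (hu : ContDiff ℝ 1 u)
    (hsupp : tsupport u ⊆ {x : EuclideanSpace ℝ (Fin n) | R < ‖x‖})
    (i : Fin n) (v : EuclideanSpace ℝ (Fin n)) :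
    Continuous (fun x => dFf n s u i x v) := by
  apply cont_off_support hR hsupp
  · intro y hy; rw [dFf_zero hy]; rfl
  · intro x hx
    simp only [dFf_apply]
    have hn : ‖x‖ ≠ 0 := norm_ne_zero_iff.mpr hx
    have hu_cont : Continuous u := hu.continuous
    have hdu : Continuous (fun y => fderiv ℝ u y v) :=
      (hu.continuous_fderiv one_ne_zero).clm_apply continuous_const
    have hproj : Continuous (fun y : EuclideanSpace ℝ (Fin n) => y i) :=
      (EuclideanSpace.proj i : EuclideanSpace ℝ (Fin n) →L[ℝ] ℝ).continuous
    have hinner : Continuous (fun y : EuclideanSpace ℝ (Fin n) => (inner ℝ y v : ℝ)) :=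
      continuous_inner.comp (continuous_id.prodMk continuous_const)
    have hgf : ContinuousAt (gf n s u) x :=
      ((hu_cont.pow 2).continuousAt).mul (continuousAt_qf hx)
    have hi : ContinuousAt (fun y : EuclideanSpace ℝ (Fin n) => ‖y‖⁻¹) x :=
      (continuous_norm.continuousAt).inv₀ hn
    exact (((continuousAt_const.mul hproj.continuousAt).mul
      ((((continuousAt_const.mul hu_cont.continuousAt).mul (continuousAt_qf hx)).mul
          hdu.continuousAt).add
        ((((hu_cont.pow 2).continuousAt).mul (continuousAt_cf hx)).mul
          (hi.mul hinner.continuousAt)))).add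
      ((continuousAt_const.mul hgf).mul continuousAt_const))

theorem cont_Ff {R : ℝ} (hR : 0 < R) (hu : ContDiff ℝ 1 u)
    (hsupp : tsupport u ⊆ {x : EuclideanSpace ℝ (Fin n) | R < ‖x‖}) (i : Fin n) :
    Continuous (Ff n s u i) := by
  apply cont_off_support hR hsupp
  · intro y hy; exact Ff_zero hy i
  · intro x hx
    have hproj : Continuous (fun y : EuclideanSpace ℝ (Fin n) => y i) :=
      (EuclideanSpace.proj i : EuclideanSpace ℝ (Fin n) →L[ℝ] ℝ).continuous
    exact (continuousAt_const.mul
      ((hu.continuous.pow 2).continuousAt.mul (continuousAt_qf hx))).mul hproj.continuousAt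

end cont

section ibp
variable {n : ℕ} {s : ℝ} {u : EuclideanSpace ℝ (Fin n) → ℝ}

theorem hcs_of_zero {f : EuclideanSpace ℝ (Fin n) → ℝ} (hcs : HasCompactSupport u)
    (hf_zero : ∀ y ∉ tsupport u, f y = 0) : HasCompactSupport f :=
  HasCompactSupport.intro hcs (fun x hx => hf_zero x hx)

theorem integral_dFf_eq_zero {R : ℝ} (hR : 0 < R) (hu : ContDiff ℝ 1 u)
    (hcs : HasCompactSupport u)
    (hsupp : tsupport u ⊆ {x : EuclideanSpace ℝ (Fin n) | R < ‖x‖}) (i : Fin n) :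
    ∫ x : EuclideanSpace ℝ (Fin n), dFf n s u i x (EuclideanSpace.single i 1) = 0 := by
  set v : EuclideanSpace ℝ (Fin n) := EuclideanSpace.single i 1
  have hd : ∀ x, HasFDerivAt (Ff n s u i) (dFf n s u i x) x := by
    intro x
    apply hasFDerivAt_Ff hu _ i
    by_cases hmem : x ∈ tsupport u
    · left
      intro h0
      have := hsupp hmem
      rw [h0] at this
      simp at this
      linarith
    · right; exact hmem
  have hint1 : Integrable (fun x => dFf n s u i x v * (1:ℝ)) := by
    simp only [mul_one]
    exact (cont_dFf_apply hR hu hsupp i v).integrable_of_hasCompactSupport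
      (hcs_of_zero hcs (fun y hy => by rw [dFf_zero hy]; rfl))
  have hint2 : Integrable (fun x => Ff n s u i x * ((0 : EuclideanSpace ℝ (Fin n) →L[ℝ] ℝ) v)) := by
    simp only [ContinuousLinearMap.zero_apply, mul_zero]
    exact integrable_zero _ _ _
  have hint3 : Integrable (fun x => Ff n s u i x * (1:ℝ)) := by
    simp only [mul_one]
    exact (cont_Ff hR hu hsupp i).integrable_of_hasCompactSupport
      (hcs_of_zero hcs (fun y hy => Ff_zero hy i))
  have key := integral_bilinear_hasFDerivAt_right_eq_neg_left_of_integrable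
    (μ := (volume : Measure (EuclideanSpace ℝ (Fin n))))
    (B := ContinuousLinearMap.mul ℝ ℝ) (v := v)
    (f := Ff n s u i) (f' := dFf n s u i)
    (g := fun _ => (1:ℝ)) (g' := fun _ => 0)
    (by simpa using hint1) (by simpa using hint2) (by simpa using hint3)
    (fun x _ => hd x) (fun x _ => hasFDerivAt_const (1:ℝ) x)
  simp only [ContinuousLinearMap.mul_apply', ContinuousLinearMap.zero_apply, mul_zero,
    mul_one, integral_zero] at key
  linarith [key]

end ibp

section ptwise
variable {n : ℕ} {s : ℝ} {u : EuclideanSpace ℝ (Fin n) → ℝ}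

theorem sum_sq_expand (a : Fin n → ℝ) (x : EuclideanSpace ℝ (Fin n)) (b : ℝ) :
    (0:ℝ) ≤ ∑ i, (a i)^2 - 2*b*(∑ i, a i * x i) + b^2 * (∑ i, (x i)^2) := by
  have h : ∀ i ∈ Finset.univ, (a i - b*x i)^2
      = ((a i)^2 - 2*b*(a i * x i)) + b^2*(x i)^2 := fun i _ => by ring
  have h0 : (0:ℝ) ≤ ∑ i, (a i - b * x i)^2 := Finset.sum_nonneg (fun i _ => sq_nonneg _)
  rw [Finset.sum_congr rfl h, Finset.sum_add_distrib, Finset.sum_sub_distrib,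
    ← Finset.mul_sum, ← Finset.mul_sum] at h0
  linarith

theorem ptwise_ineq {R ε : ℝ} (hε : 0 < ε) (hR : 0 < R) (hRε : |s| * n / ε ≤ R)
    (hn : 1 ≤ n) (hu : ContDiff ℝ 1 u)
    (hsupp : tsupport u ⊆ {x : EuclideanSpace ℝ (Fin n) | R < ‖x‖})
    (x : EuclideanSpace ℝ (Fin n)) :
    (s^2 - ε) * (Real.exp (-2*s*‖x‖) * (u x)^2)
      ≤ Real.exp (-2*s*‖x‖) * gradSq n u x
        + ∑ i, dFf n s u i x (EuclideanSpace.single i 1) := by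
  by_cases hmem : x ∈ tsupport u
  swap
  · have h1 : u x = 0 := u_zero hmem
    have h2 : ∀ i : Fin n, pd n u i x = 0 := by
      intro i; rw [pd, fderiv_u_zero hmem]; rfl
    have h3 : gradSq n u x = 0 := by
      rw [gradSq]; exact Finset.sum_eq_zero (fun i _ => by rw [h2 i]; ring)
    have h4 : ∀ i : Fin n, dFf n s u i x (EuclideanSpace.single i 1) = 0 := by
      intro i; rw [dFf_zero hmem]; rfl
    rw [h1, h3, Finset.sum_eq_zero (fun i _ => h4 i)]
    simp
  · have hrR : R < ‖x‖ := hsupp hmem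
    have hr : (0:ℝ) < ‖x‖ := lt_trans hR hrR
    set r : ℝ := ‖x‖
    have hr0 : r ≠ 0 := ne_of_gt hr
    set W : ℝ := Real.exp (-2*s*r) with hW_def
    have hW : 0 < W := Real.exp_pos _
    set U : ℝ := u x
    set a : Fin n → ℝ := fun i => fderiv ℝ u x (EuclideanSpace.single i 1) with ha
    set A : ℝ := fderiv ℝ u x x with hA
    have hsumA : ∑ i, x i * a i = A := sum_coord_mul x (fderiv ℝ u x)
    have hsumsq : ∑ i, (x i)^2 = r^2 := sum_coord_sq x
    have hinner : ∀ i : Fin n, (inner ℝ x (EuclideanSpace.single i 1) : ℝ) = x i := by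
      intro i; simp [EuclideanSpace.inner_single_right]
    have happ : ∀ i : Fin n, (EuclideanSpace.single i (1:ℝ)) i = 1 := by
      intro i; simp [EuclideanSpace.single_apply]
    -- compute the divergence sum
    have hdiv : ∑ i, dFf n s u i x (EuclideanSpace.single i 1)
        = (-s*2*U*(qf n s x))*A + (-s*U^2*(cf n s x)*r⁻¹)*r^2 + (n:ℝ)*(-s*(gf n s u x)) := by
      rw [Finset.sum_congr rfl (fun i (_ : i ∈ Finset.univ) => dFf_apply i x _)]
      have h : ∀ i ∈ Finset.univ, -s * x i * (2 * u x * qf n s x * (fderiv ℝ u x (EuclideanSpace.single i 1))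
            + u x ^ 2 * cf n s x * (‖x‖⁻¹ * (inner ℝ x (EuclideanSpace.single i 1) : ℝ)))
            + -s * gf n s u x * (EuclideanSpace.single i (1:ℝ)) i
          = ((-s*2*U*(qf n s x))*(x i * a i) + (-s*U^2*(cf n s x)*r⁻¹)*(x i)^2)
            + (-s*(gf n s u x)) := by
        intro i _
        rw [hinner i, happ i]
        ring
      rw [Finset.sum_congr rfl h, Finset.sum_add_distrib, Finset.sum_add_distrib,
        ← Finset.mul_sum, ← Finset.mul_sum, hsumA, hsumsq, Finset.sum_const,
        Finset.card_fin, nsmul_eq_mul]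
    have hgrad : gradSq n u x = ∑ i, (a i)^2 := by
      rw [gradSq]; rfl
    have hrinv : r⁻¹ * r = 1 := inv_mul_cancel₀ hr0
    have hq : qf n s x = W * r⁻¹ := rfl
    have hc : cf n s x = -2*s*W*r⁻¹ - W * (r⁻¹)^2 := rfl
    have hg : gf n s u x = U^2 * (W * r⁻¹) := rfl
    -- key square inequality
    have key1 : (0:ℝ) ≤ ∑ i, (a i)^2 - 2*(s*U*r⁻¹)*A + s^2*U^2 := by
      have h0 := sum_sq_expand a x (s*U*r⁻¹)
      rw [hsumsq] at h0
      have hcomm : ∑ i, a i * x i = A := by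
        rw [← hsumA]; exact Finset.sum_congr rfl (fun i _ => mul_comm _ _)
      rw [hcomm] at h0
      have hb : (s*U*r⁻¹)^2 * r^2 = s^2*U^2 := by
        field_simp
      nlinarith [h0]
    -- bound on the error term
    have key2 : s * ((n:ℝ)-1) * r⁻¹ ≤ ε := by
      have hn1 : (0:ℝ) ≤ (n:ℝ) - 1 := by
        have : (1:ℝ) ≤ (n:ℝ) := by exact_mod_cast hn
        linarith
      have h1 : s * ((n:ℝ)-1) ≤ |s| * n := by
        calc s * ((n:ℝ)-1) ≤ |s| * ((n:ℝ)-1) := by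
              apply mul_le_mul_of_nonneg_right (le_abs_self s) hn1
          _ ≤ |s| * n := by
              apply mul_le_mul_of_nonneg_left _ (abs_nonneg s)
              linarith
      have h2 : |s| * n ≤ ε * R := by
        rw [div_le_iff₀ hε] at hRε
        linarith [hRε]
      have h3 : s * ((n:ℝ)-1) * r⁻¹ ≤ ε * R * r⁻¹ := by
        apply mul_le_mul_of_nonneg_right (le_trans h1 h2) (inv_nonneg.mpr hr.le)
      have h4 : ε * R * r⁻¹ ≤ ε := by
        rw [mul_assoc]
        have h5 : R * r⁻¹ ≤ 1 := by
          rw [← mul_inv_cancel₀ hr0]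
          exact mul_le_mul_of_nonneg_right hrR.le (inv_nonneg.mpr hr.le)
        nlinarith
      linarith
    -- assemble
    rw [hdiv, hgrad, hq, hc, hg]
    set S2 : ℝ := ∑ i, (a i)^2 with hS2
    have hsimp : (-s*U^2*(-2*s*W*r⁻¹ - W*(r⁻¹)^2)*r⁻¹)*r^2
        = 2*s^2*U^2*W + s*U^2*W*r⁻¹ := by
      field_simp
      ring
    rw [hsimp]
    have h1 : 0 ≤ W*S2 - 2*s*U*r⁻¹*A*W + s^2*U^2*W := by
      have e1 : W*(S2 - 2*(s*U*r⁻¹)*A + s^2*U^2)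
          = W*S2 - 2*s*U*r⁻¹*A*W + s^2*U^2*W := by ring
      rw [← e1]
      exact mul_nonneg hW.le key1
    have h2 : s*((n:ℝ)-1)*r⁻¹*(U^2*W) ≤ ε * (U^2*W) :=
      mul_le_mul_of_nonneg_right key2 (by positivity)
    have e2 : s*((n:ℝ)-1)*r⁻¹*(U^2*W) = s*(n:ℝ)*U^2*W*r⁻¹ - s*U^2*W*r⁻¹ := by ring
    linarith [h1, h2, e2]
end ptwise


/-- Flat-case exponentially weighted Poincaré inequality in the asymptotically
flat setting: for every `ε > 0` there is `R > 0` such that for all `C¹`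
functions `u` compactly supported in `{‖x‖ > R}`,
`∫ e^{−2s‖x‖}|∇u|² ≥ (s² − ε) ∫ e^{−2s‖x‖} u²`. -/

theorem weighted_poincare_exp_radial (n : ℕ) (hn : 1 ≤ n) (s : ℝ) :
    ∀ ε > (0:ℝ), ∃ R > (0:ℝ),
      ∀ u : EuclideanSpace ℝ (Fin n) → ℝ,
        ContDiff ℝ 1 u → HasCompactSupport u →
        tsupport u ⊆ {x : EuclideanSpace ℝ (Fin n) | R < ‖x‖} →
        ∫ x : EuclideanSpace ℝ (Fin n),
            Real.exp (-2 * s * ‖x‖) * gradSq n u x ≥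
          (s ^ 2 - ε) *
            ∫ x : EuclideanSpace ℝ (Fin n),
              Real.exp (-2 * s * ‖x‖) * (u x) ^ 2 := by
  intro ε hε
  refine ⟨max 1 (|s| * n / ε), lt_of_lt_of_le one_pos (le_max_left _ _), ?_⟩
  intro u hu hcs hsupp
  set R : ℝ := max 1 (|s| * n / ε) with hR_def
  have hR : 0 < R := lt_of_lt_of_le one_pos (le_max_left _ _)
  have hRε : |s| * n / ε ≤ R := le_max_right _ _
  -- continuity and support facts
  have hw_cont : Continuous (fun x : EuclideanSpace ℝ (Fin n) => Real.exp (-2*s*‖x‖)) :=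
    Real.continuous_exp.comp (continuous_const.mul continuous_norm)
  have hgrad_cont : Continuous (fun x => gradSq n u x) := by
    simp only [gradSq, pd]
    exact continuous_finset_sum _ (fun i _ =>
      ((hu.continuous_fderiv one_ne_zero).clm_apply continuous_const).pow 2)
  have hgrad_zero : ∀ y ∉ tsupport u, gradSq n u y = 0 := by
    intro y hy
    rw [gradSq]
    refine Finset.sum_eq_zero (fun i _ => ?_)
    rw [pd, fderiv_u_zero hy]
    simp
  have h_int_grad : Integrable (fun x => Real.exp (-2*s*‖x‖) * gradSq n u x) := by
    apply (hw_cont.mul hgrad_cont).integrable_of_hasCompactSupport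
    exact hcs_of_zero hcs (fun y hy => by simp only [Pi.mul_apply]; rw [hgrad_zero y hy, mul_zero])
  have h_int_u2 : Integrable (fun x => Real.exp (-2*s*‖x‖) * (u x)^2) := by
    apply (hw_cont.mul (hu.continuous.pow 2)).integrable_of_hasCompactSupport
    exact hcs_of_zero hcs (fun y hy => by simp only [Pi.mul_apply, Pi.pow_apply]; rw [u_zero hy]; ring)
  have h_int_div : ∀ i : Fin n,
      Integrable (fun x => dFf n s u i x (EuclideanSpace.single i 1)) := by
    intro i
    exact (cont_dFf_apply hR hu hsupp i _).integrable_of_hasCompactSupport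
      (hcs_of_zero hcs (fun y hy => by rw [dFf_zero hy]; rfl))
  have h_int_sum : Integrable
      (fun x => ∑ i, dFf n s u i x (EuclideanSpace.single i 1)) :=
    integrable_finset_sum _ (fun i _ => h_int_div i)
  have hzero : ∀ i : Fin n,
      ∫ x : EuclideanSpace ℝ (Fin n), dFf n s u i x (EuclideanSpace.single i 1) = 0 :=
    fun i => integral_dFf_eq_zero hR hu hcs hsupp i
  have hmono : ∫ x : EuclideanSpace ℝ (Fin n), (s^2 - ε) * (Real.exp (-2*s*‖x‖) * (u x)^2)
      ≤ ∫ x : EuclideanSpace ℝ (Fin n), (Real.exp (-2*s*‖x‖) * gradSq n u x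
        + ∑ i, dFf n s u i x (EuclideanSpace.single i 1)) := by
    apply integral_mono (h_int_u2.const_mul _) (h_int_grad.add h_int_sum)
    intro x
    exact ptwise_ineq hε hR hRε hn hu hsupp x
  rw [integral_add h_int_grad h_int_sum, integral_finset_sum _ (fun i _ => h_int_div i)] at hmono
  rw [Finset.sum_eq_zero (fun i _ => hzero i), add_zero] at hmono
  rw [MeasureTheory.integral_const_mul] at hmono
  exact hmono
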